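/- Let k ≥ 3 and N ≥ 2 be integers. If there exists a k-AP-free set A ⊆ {1, …, N} with |A| = r ≥ 1, then there exists a coloring of {1, …, N} with at most ⌈2·N·log₂ N / r⌉ colors such that no nontrivial k-term arithmetic progression is monochromatic, i.e. there are no integers x and δ ≠ 0 with x, x+δ, …, x+(k−1)δ ∈ {1, …, N} all receiving the same color. -/
import Mathlib

open Finset

/-- `A` is `k`-AP-free: it contains no nontrivial `k`-term arithmetic progression. -/
def APFree (k : ℕ) (A : Set ℤ) : Prop :=
  ¬ ∃ (a δ : ℤ), δ ≠ 0 ∧ ∀ j : ℕ, j < k → a + (j : ℤ) * δ ∈ A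

namespace Stmt10Aux

/-- Pigeonhole: some shift `c` of `A` covers at least an `r/(2N-1)` fraction of `U`. -/
lemma exists_pick (N : ℕ) (A U : Finset ℤ) :
    ∃ c : ℤ, 1 ≤ N → U ⊆ Icc 1 (N:ℤ) → A ⊆ Icc 1 (N:ℤ) →
      A.card * U.card ≤ (2*N - 1) * (U.filter (fun u => u - c ∈ A)).card := by
  by_cases h : 1 ≤ N ∧ U ⊆ Icc 1 (N:ℤ) ∧ A ⊆ Icc 1 (N:ℤ)
  · obtain ⟨hN, hU, hA⟩ := h
    set S : Finset ℤ := Finset.Icc (1-(N:ℤ)) ((N:ℤ)-1) with hS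
    have hScard : S.card = 2*N - 1 := by
      rw [hS, Int.card_Icc]; omega
    have hinner : ∀ u ∈ U, (S.filter (fun c => u - c ∈ A)).card = A.card := by
      intro u hu
      have himg : S.filter (fun c => u - c ∈ A) = A.image (fun b => u - b) := by
        ext c
        simp only [mem_filter, mem_image, hS, mem_Icc]
        constructor
        · rintro ⟨⟨h1, h2⟩, h3⟩
          exact ⟨u - c, h3, by ring⟩
        · rintro ⟨b, hb, rfl⟩
          have hb' := hA hb
          have hu' := hU hu
          simp only [mem_Icc] at hb' hu'
          refine ⟨⟨by omega, by omega⟩, ?_⟩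
          have : u - (u - b) = b := by ring
          rw [this]; exact hb
      rw [himg, Finset.card_image_of_injective _ sub_right_injective]
    have hsum : ∑ c ∈ S, (U.filter (fun u => u - c ∈ A)).card = A.card * U.card := by
      calc ∑ c ∈ S, (U.filter (fun u => u - c ∈ A)).card
          = ∑ c ∈ S, ∑ u ∈ U, (if u - c ∈ A then 1 else 0) := by
            refine Finset.sum_congr rfl fun c _ => ?_
            rw [Finset.card_filter]
        _ = ∑ u ∈ U, ∑ c ∈ S, (if u - c ∈ A then 1 else 0) := Finset.sum_comm
        _ = ∑ u ∈ U, (S.filter (fun c => u - c ∈ A)).card := by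
            refine Finset.sum_congr rfl fun u _ => (Finset.card_filter _ _).symm
        _ = ∑ _u ∈ U, A.card := Finset.sum_congr rfl hinner
        _ = A.card * U.card := by rw [Finset.sum_const, smul_eq_mul, mul_comm]
    have hSne : S.Nonempty := by
      refine ⟨0, ?_⟩
      simp only [hS, mem_Icc]
      omega
    have hle : ∑ _c ∈ S, A.card * U.card ≤
        ∑ c ∈ S, (2*N-1) * (U.filter (fun u => u - c ∈ A)).card := by
      rw [Finset.sum_const, smul_eq_mul, ← Finset.mul_sum, hsum, hScard]
    obtain ⟨c, _, hc⟩ := Finset.exists_le_of_sum_le hSne hle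
    exact ⟨c, fun _ _ _ => hc⟩
  · exact ⟨0, by tauto⟩

noncomputable def pickc (N : ℕ) (A U : Finset ℤ) : ℤ := Classical.choose (exists_pick N A U)

lemma pickc_spec (N : ℕ) (A U : Finset ℤ) (hN : 1 ≤ N) (hU : U ⊆ Icc 1 (N:ℤ))
    (hA : A ⊆ Icc 1 (N:ℤ)) :
    A.card * U.card ≤ (2*N - 1) * (U.filter (fun u => u - pickc N A U ∈ A)).card :=
  Classical.choose_spec (exists_pick N A U) hN hU hA

noncomputable def Useq (N : ℕ) (A : Finset ℤ) : ℕ → Finset ℤ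
  | 0 => Icc 1 (N:ℤ)
  | i+1 => Useq N A i \ (A.image (· + pickc N A (Useq N A i)))

noncomputable def cov (N : ℕ) (A : Finset ℤ) (i : ℕ) : Finset ℤ :=
  A.image (· + pickc N A (Useq N A i))

lemma Useq_succ (N : ℕ) (A : Finset ℤ) (i : ℕ) :
    Useq N A (i+1) = Useq N A i \ cov N A i := rfl

lemma Useq_subset (N : ℕ) (A : Finset ℤ) : ∀ i, Useq N A i ⊆ Icc 1 (N:ℤ)
  | 0 => subset_rfl
  | i+1 => (Finset.sdiff_subset).trans (Useq_subset N A i)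

lemma mem_cov_iff (N : ℕ) (A : Finset ℤ) (i : ℕ) (u : ℤ) :
    u ∈ cov N A i ↔ u - pickc N A (Useq N A i) ∈ A := by
  simp only [cov, mem_image]
  constructor
  · rintro ⟨b, hb, h⟩
    have : u - pickc N A (Useq N A i) = b := by omega
    rwa [this]
  · intro h
    exact ⟨u - pickc N A (Useq N A i), h, by ring⟩

lemma decay (N : ℕ) (A : Finset ℤ) (hN : 1 ≤ N) (hA : A ⊆ Icc 1 (N:ℤ)) (i : ℕ) :
    (2*N-1) * (Useq N A (i+1)).card ≤ (2*N-1 - A.card) * (Useq N A i).card := by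
  set U := Useq N A i with hUdef
  set c := pickc N A U with hc
  have hpick := pickc_spec N A U hN (Useq_subset N A i) hA
  have hsplit : (U.filter (fun u => u - c ∈ A)).card
      + (U.filter (fun u => ¬ (u - c ∈ A))).card = U.card :=
    Finset.card_filter_add_card_filter_not _
  have hUsucc : Useq N A (i+1) = U.filter (fun u => ¬ (u - c ∈ A)) := by
    rw [Useq_succ]
    ext u
    simp only [mem_sdiff, mem_filter, mem_cov_iff, ← hUdef, ← hc]
  have hAle : A.card ≤ 2*N - 1 := by
    have h1 : A.card ≤ (Icc (1:ℤ) (N:ℤ)).card := Finset.card_le_card hA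
    have h2 : (Icc (1:ℤ) (N:ℤ)).card = N := by rw [Int.card_Icc]; omega
    omega
  rw [hUsucc]
  set f := (U.filter (fun u => u - c ∈ A)).card
  set g := (U.filter (fun u => ¬ (u - c ∈ A))).card
  set s := 2*N-1
  set a := A.card
  -- a * U.card ≤ s * f, f + g = U.card, a ≤ s ⊢ s * g ≤ (s - a) * U.card
  have key : s * g + a * U.card ≤ s * U.card := by
    calc s * g + a * U.card ≤ s * g + s * f := by omega
      _ = s * (f + g) := by ring
      _ = s * U.card := by rw [hsplit]
  have : (s - a) * U.card = s * U.card - a * U.card := by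
    rw [Nat.sub_mul]
  omega

lemma decay_pow (N : ℕ) (A : Finset ℤ) (hN : 1 ≤ N) (hA : A ⊆ Icc 1 (N:ℤ)) (t : ℕ) :
    (2*N-1)^t * (Useq N A t).card ≤ (2*N-1 - A.card)^t * N := by
  induction t with
  | zero =>
    simp only [pow_zero, one_mul, Useq]
    rw [Int.card_Icc]; omega
  | succ i ih =>
    calc (2*N-1)^(i+1) * (Useq N A (i+1)).card
        = (2*N-1)^i * ((2*N-1) * (Useq N A (i+1)).card) := by ring
      _ ≤ (2*N-1)^i * ((2*N-1 - A.card) * (Useq N A i).card) :=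
          Nat.mul_le_mul_left _ (decay N A hN hA i)
      _ = (2*N-1 - A.card) * ((2*N-1)^i * (Useq N A i).card) := by ring
      _ ≤ (2*N-1 - A.card) * ((2*N-1 - A.card)^i * N) := Nat.mul_le_mul_left _ ih
      _ = (2*N-1 - A.card)^(i+1) * N := by ring

lemma uncovered_mem (N : ℕ) (A : Finset ℤ) (x : ℤ) (hx : x ∈ Icc 1 (N:ℤ)) :
    ∀ m, (∀ i < m, x ∉ cov N A i) → x ∈ Useq N A m := by
  intro m
  induction m with
  | zero => intro _; exact hx
  | succ i ih =>
    intro h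
    rw [Useq_succ, mem_sdiff]
    exact ⟨ih (fun j hj => h j (by omega)), h i (by omega)⟩

/-- The key analytic estimate. -/
lemma analytic (N r t : ℕ) (hN : 2 ≤ N) (hr : 1 ≤ r) (hrN : r ≤ N)
    (ht : 2 * (N:ℝ) * Real.logb 2 N / (r:ℝ) ≤ (t:ℝ)) :
    N * (2*N - 1 - r)^t < (2*N-1)^t := by
  have hrs : r ≤ 2*N - 1 := by omega
  have h1N : 1 ≤ 2*N := by omega
  rify [hrs, h1N]
  set M : ℝ := 2*(N:ℝ) - 1 with hM
  have hM0 : (0:ℝ) < M := by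
    have : (2:ℝ) ≤ (N:ℝ) := by exact_mod_cast hN
    simp only [hM]; linarith
  have hr0 : (0:ℝ) < (r:ℝ) := by exact_mod_cast hr
  have hrM : (r:ℝ) ≤ M := by
    have : (r:ℝ) ≤ (N:ℝ) := by exact_mod_cast hrN
    have hN1 : (1:ℝ) ≤ (N:ℝ) := by exact_mod_cast (by omega : 1 ≤ N)
    simp only [hM]; linarith
  have hlnN : 0 < Real.log N := Real.log_pos (by exact_mod_cast hN)
  have hln2 : 0 < Real.log 2 := Real.log_pos (by norm_num)
  have hln2' : Real.log 2 < 1 := by have := Real.log_two_lt_d9; linarith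
  -- step 1 : r * t > M * log N
  have hstep : M * Real.log N < (r:ℝ) * t := by
    have h2 : 2 * (N:ℝ) * Real.logb 2 N ≤ (r:ℝ) * t := by
      rw [div_le_iff₀ hr0] at ht
      linarith [ht]
    have h3 : M * Real.log N < 2 * (N:ℝ) * Real.logb 2 N := by
      rw [Real.logb, div_eq_mul_inv]
      have hMlt : M * Real.log 2 < 2 * (N:ℝ) := by
        nlinarith [hM0]
      have : M * Real.log N * Real.log 2 < 2 * (N:ℝ) * Real.log N := by
        nlinarith [hlnN, hMlt]
      have hinv : (0:ℝ) < (Real.log 2)⁻¹ := by positivity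
      calc M * Real.log N = (M * Real.log N * Real.log 2) * (Real.log 2)⁻¹ := by
            field_simp
        _ < (2 * (N:ℝ) * Real.log N) * (Real.log 2)⁻¹ := by
            exact mul_lt_mul_of_pos_right this hinv
        _ = 2 * (N:ℝ) * (Real.log N * (Real.log 2)⁻¹) := by ring
    linarith
  -- step 2 : (M - r)^t ≤ exp(-(r/M)*t) * M^t
  have hbase : M - (r:ℝ) = (1 - r/M) * M := by field_simp
  have h1p : (0:ℝ) ≤ 1 - (r:ℝ)/M := by
    rw [sub_nonneg, div_le_one hM0]; exact hrM
  have hexp : 1 - (r:ℝ)/M ≤ Real.exp (-(r/M)) := by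
    have := Real.add_one_le_exp (-(r:ℝ)/M)
    have hre : -(r:ℝ)/M = -((r:ℝ)/M) := by ring
    linarith [hre ▸ this]
  have hpow : (M - (r:ℝ))^t ≤ Real.exp (-((r:ℝ)/M) * t) * M^t := by
    rw [hbase, mul_pow]
    have h1 : (1 - (r:ℝ)/M)^t ≤ (Real.exp (-((r:ℝ)/M)))^t :=
      pow_le_pow_left₀ h1p hexp t
    have h2 : (Real.exp (-((r:ℝ)/M)))^t = Real.exp (-((r:ℝ)/M) * t) := by
      rw [mul_comm, Real.exp_nat_mul]
    rw [← h2]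
    exact mul_le_mul_of_nonneg_right h1 (by positivity)
  -- step 3 : N * exp(-(r/M)*t) < 1
  have hNexp : (N:ℝ) * Real.exp (-((r:ℝ)/M) * t) < 1 := by
    have hN0 : (0:ℝ) < (N:ℝ) := by positivity
    have harg : -((r:ℝ)/M) * t < -Real.log N := by
      rw [neg_mul, neg_lt_neg_iff, div_mul_eq_mul_div, lt_div_iff₀ hM0]
      linarith [hstep]
    have : Real.exp (-((r:ℝ)/M) * t) < Real.exp (-Real.log N) :=
      Real.exp_lt_exp.mpr harg
    rw [Real.exp_neg, Real.exp_log hN0] at this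
    calc (N:ℝ) * Real.exp (-((r:ℝ)/M) * t) < (N:ℝ) * ((N:ℝ))⁻¹ :=
          mul_lt_mul_of_pos_left this hN0
      _ = 1 := by field_simp
  calc (N:ℝ) * (M - (r:ℝ))^t ≤ (N:ℝ) * (Real.exp (-((r:ℝ)/M) * t) * M^t) := by
        have hN0 : (0:ℝ) ≤ (N:ℝ) := by positivity
        exact mul_le_mul_of_nonneg_left hpow hN0
    _ = ((N:ℝ) * Real.exp (-((r:ℝ)/M) * t)) * M^t := by ring
    _ < 1 * M^t := by
        exact mul_lt_mul_of_pos_right hNexp (by positivity)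
    _ = M^t := one_mul _

end Stmt10Aux

open Stmt10Aux in
/-- if there is a `k`-AP-free `A ⊆ {1, …, N}` of size `r ≥ 1`, then
`{1, …, N}` can be colored with at most `⌈2·N·log₂ N / r⌉` colors (colors being the
naturals below that bound) such that no nontrivial `k`-term arithmetic progression is
monochromatic. -/
theorem stmt10 (k N r : ℕ) (hk : 3 ≤ k) (hN : 2 ≤ N) (hr : 1 ≤ r)
    (A : Finset ℤ) (hA : A ⊆ Finset.Icc 1 (N : ℤ)) (hcard : A.card = r)
    (hAP : APFree k (↑A : Set ℤ)) :
    ∃ χ : ℤ → ℕ,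
      (∀ x ∈ Finset.Icc (1 : ℤ) (N : ℤ),
        (χ x : ℤ) < ⌈(2 * (N : ℝ) * Real.logb 2 N) / (r : ℝ)⌉) ∧
      ¬ ∃ (a δ : ℤ), δ ≠ 0 ∧
        (∀ j : ℕ, j < k → a + (j : ℤ) * δ ∈ Finset.Icc (1 : ℤ) (N : ℤ)) ∧
        (∀ j : ℕ, j < k → χ (a + (j : ℤ) * δ) = χ a) := by
  classical
  set v : ℝ := 2 * (N : ℝ) * Real.logb 2 N / (r : ℝ) with hv
  have hrN : r ≤ N := by
    have h1 : A.card ≤ (Finset.Icc (1:ℤ) (N:ℤ)).card := Finset.card_le_card hA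
    have h2 : (Finset.Icc (1:ℤ) (N:ℤ)).card = N := by rw [Int.card_Icc]; omega
    omega
  have hv0 : 0 < v := by
    have hlogb : 0 < Real.logb 2 N :=
      Real.logb_pos (by norm_num) (by exact_mod_cast hN)
    have : (0:ℝ) < (N:ℝ) := by positivity
    have : (0:ℝ) < (r:ℝ) := by exact_mod_cast hr
    positivity
  set t : ℕ := (⌈v⌉).toNat with hT
  have hceil0 : 0 < ⌈v⌉ := Int.ceil_pos.2 hv0
  have htZ : (t : ℤ) = ⌈v⌉ := by rw [hT, Int.toNat_of_nonneg (le_of_lt hceil0)]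
  have htR : v ≤ (t : ℝ) := by
    have h1 : v ≤ (⌈v⌉ : ℝ) := Int.le_ceil v
    have h2 : ((⌈v⌉:ℤ) : ℝ) = ((t:ℤ) : ℝ) := by rw [htZ]
    rw [h2] at h1
    exact_mod_cast h1
  have hN1 : 1 ≤ N := by omega
  -- the covering empties out after t steps
  have hempty : Useq N A t = ∅ := by
    have h1 := decay_pow N A hN1 hA t
    rw [hcard] at h1
    have h2 := analytic N r t hN hr hrN (by rw [← hv]; exact htR)
    have h3 : (2*N-1)^t * (Useq N A t).card < (2*N-1)^t * 1 := by
      calc (2*N-1)^t * (Useq N A t).card ≤ (2*N-1-r)^t * N := h1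
        _ = N * (2*N-1-r)^t := by ring
        _ < (2*N-1)^t := h2
        _ = (2*N-1)^t * 1 := by ring
    have := Nat.lt_of_mul_lt_mul_left h3
    exact Finset.card_eq_zero.1 (by omega)
  have hcover : ∀ x ∈ Finset.Icc (1:ℤ) (N:ℤ), ∃ i, i < t ∧ x ∈ cov N A i := by
    intro x hx
    by_contra hcon
    push_neg at hcon
    have : x ∈ Useq N A t := uncovered_mem N A x hx t (fun i hi => hcon i hi)
    rw [hempty] at this
    exact absurd this (Finset.notMem_empty x)
  refine ⟨fun x => if h : ∃ i, x ∈ cov N A i then Nat.find h else 0, ?_, ?_⟩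
  · intro x hx
    obtain ⟨i, hit, hxi⟩ := hcover x hx
    have hex : ∃ i, x ∈ cov N A i := ⟨i, hxi⟩
    simp only [dif_pos hex]
    have : Nat.find hex ≤ i := Nat.find_min' hex hxi
    rw [← htZ]
    exact_mod_cast lt_of_le_of_lt this hit
  · rintro ⟨a, δ, hδ, hmem, hmono⟩
    have ha : a ∈ Finset.Icc (1:ℤ) (N:ℤ) := by
      have := hmem 0 (by omega)
      simpa using this
    have hexa : ∃ i, a ∈ cov N A i := by
      obtain ⟨i, _, hxi⟩ := hcover a ha
      exact ⟨i, hxi⟩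
    set i : ℕ := Nat.find hexa with hi
    have hall : ∀ j : ℕ, j < k → a + (j:ℤ) * δ ∈ cov N A i := by
      intro j hj
      have hxIcc := hmem j hj
      have hexx : ∃ l, a + (j:ℤ)*δ ∈ cov N A l := by
        obtain ⟨l, _, hxl⟩ := hcover _ hxIcc
        exact ⟨l, hxl⟩
      have heq := hmono j hj
      simp only [dif_pos hexx, dif_pos hexa] at heq
      have := Nat.find_spec hexx
      rwa [heq] at this
    apply hAP
    refine ⟨a - pickc N A (Useq N A i), δ, hδ, ?_⟩
    intro j hj
    have h1 := hall j hj
    rw [mem_cov_iff] at h1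
    have : a - pickc N A (Useq N A i) + (j:ℤ) * δ
        = a + (j:ℤ)*δ - pickc N A (Useq N A i) := by ring
    rw [this]
    exact_mod_cast h1
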